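/- Let g_A ∈ (0,1), let π_A, π_B ∈ [0,1] with π_B ≤ π_A and π_A > 0, and let u₁ ≥ 0 ≥ u₀. If g_A·u₁ + (1−g_A)·u₀ ≤ 0, then the policy τ* given by τ*(1,A) = π_B/π_A, τ*(0,A) = 0, τ*(1,B) = 1, τ*(0,B) = 0 satisfies demographic parity, and U(τ*) ≥ U(τ) for every policy τ satisfying demographic parity. -/
import Mathlib


open Filter Set Topology

/-- Proposition: AA1 / under-acceptance case.
Policies are maps `τ : Bool → Bool → ℝ`, where `τ v j` is the selection probability of an
individual with qualification `v` (`true` = qualified) in group `j` (`true` = A, `false` = B).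
If `g_A·u₁ + (1−g_A)·u₀ ≤ 0` then the policy
`τ*(1,A) = π_B/π_A, τ*(0,A) = 0, τ*(1,B) = 1, τ*(0,B) = 0`
satisfies demographic parity and maximizes the institutional utility among all
demographic-parity policies. -/
theorem AA1_policy_optimal
    (gA πA πB u₁ u₀ : ℝ)
    (hgA : gA ∈ Set.Ioo (0:ℝ) 1)
    (hπA : πA ∈ Set.Icc (0:ℝ) 1) (hπB : πB ∈ Set.Icc (0:ℝ) 1)
    (hBA : πB ≤ πA) (hApos : 0 < πA)
    (hu1 : 0 ≤ u₁) (hu0 : u₀ ≤ 0)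
    (hAA1 : gA * u₁ + (1 - gA) * u₀ ≤ 0) :
    -- τ* satisfies demographic parity
    ((πB / πA) * πA + 0 * (1 - πA) = 1 * πB + 0 * (1 - πB)) ∧
    -- and U(τ*) ≥ U(τ) for every policy τ satisfying demographic parity
    (∀ τ : Bool → Bool → ℝ,
      (∀ v j, τ v j ∈ Set.Icc (0:ℝ) 1) →
      (τ true true * πA + τ false true * (1 - πA)
        = τ true false * πB + τ false false * (1 - πB)) →
      gA * (u₁ * τ true true * πA + u₀ * τ false true * (1 - πA))
          + (1 - gA) * (u₁ * τ true false * πB + u₀ * τ false false * (1 - πB))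
        ≤ gA * (u₁ * (πB / πA) * πA + u₀ * 0 * (1 - πA))
          + (1 - gA) * (u₁ * 1 * πB + u₀ * 0 * (1 - πB))) := by
  obtain ⟨hg0, hg1⟩ := hgA
  have hdiv : πB / πA * πA = πB := div_mul_cancel₀ _ (ne_of_gt hApos)
  constructor
  · rw [hdiv]; ring
  · intro τ hmem hdp
    obtain ⟨ha0, ha1⟩ := hmem true true
    obtain ⟨hb0, hb1⟩ := hmem false true
    obtain ⟨hc0, hc1⟩ := hmem true false
    obtain ⟨hd0, hd1⟩ := hmem false false
    set a := τ true true
    set b := τ false true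
    set c := τ true false
    set d := τ false false
    have hgoal : gA * (u₁ * a * πA + u₀ * b * (1 - πA))
        + (1 - gA) * (u₁ * c * πB + u₀ * d * (1 - πB)) ≤ u₁ * πB := by
      set s := a * πA + b * (1 - πA) with hs
      have hB1 : 0 ≤ b * (1 - πA) := mul_nonneg hb0 (by linarith [hπA.2])
      have hD1 : 0 ≤ d * (1 - πB) := mul_nonneg hd0 (by linarith [hπB.2])
      have hu10 : 0 ≤ u₁ - u₀ := by linarith
      have heq : gA * (u₁ * a * πA + u₀ * b * (1 - πA))
          + (1 - gA) * (u₁ * c * πB + u₀ * d * (1 - πB))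
          = u₁ * s - (u₁ - u₀) * (gA * (b * (1 - πA)) + (1 - gA) * (d * (1 - πB))) := by
        linear_combination (-(gA * u₁)) * hs + (-((1 - gA) * u₁)) * hdp
      rcases le_or_gt s πB with hcase | hcase
      · have h1 : 0 ≤ (u₁ - u₀) * (gA * (b * (1 - πA)) + (1 - gA) * (d * (1 - πB))) :=
          mul_nonneg hu10 (by
            have := mul_nonneg hg0.le hB1
            have := mul_nonneg (show (0:ℝ) ≤ 1 - gA by linarith) hD1
            linarith)
        have h2 : u₁ * s ≤ u₁ * πB := mul_le_mul_of_nonneg_left hcase hu1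
        linarith
      · have hd' : s - πB ≤ d * (1 - πB) := by nlinarith [hπB.1, hπB.2]
        have h1 : 0 ≤ (u₁ - u₀) * (gA * (b * (1 - πA))) :=
          mul_nonneg hu10 (mul_nonneg hg0.le hB1)
        have h2 : (u₁ - u₀) * ((1 - gA) * (s - πB)) ≤ (u₁ - u₀) * ((1 - gA) * (d * (1 - πB))) := by
          apply mul_le_mul_of_nonneg_left _ hu10
          exact mul_le_mul_of_nonneg_left hd' (by linarith)
        have h3 : (s - πB) * (gA * u₁ + (1 - gA) * u₀) ≤ 0 :=
          mul_nonpos_of_nonneg_of_nonpos (by linarith) hAA1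
        have hid : u₁ * s - (u₁ - u₀) * ((1 - gA) * (s - πB))
            = u₁ * πB + (s - πB) * (gA * u₁ + (1 - gA) * u₀) := by ring
        nlinarith [h1, h2, h3, hid]
    calc gA * (u₁ * a * πA + u₀ * b * (1 - πA))
        + (1 - gA) * (u₁ * c * πB + u₀ * d * (1 - πB)) ≤ u₁ * πB := hgoal
      _ = gA * (u₁ * (πB / πA) * πA + u₀ * 0 * (1 - πA))
          + (1 - gA) * (u₁ * 1 * πB + u₀ * 0 * (1 - πB)) := by
            field_simp; ring
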